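/- For any integers d, t, n with t ≥ 3 and n ≥ 2dt + d + t, and any graph F on t vertices, the number of labeled copies of F in K'_{n,d} is at most the number of labeled copies of F in H_{n,d}. -/

import Mathlib

/-- The graph `H_{n,d}`: a clique `A = {0,…,n-d-1}` together with `d` further vertices
`{n-d,…,n-1}`, each adjacent to the same `d` vertices `{0,…,d-1}` of `A`. -/
def Hnd (n d : ℕ) : SimpleGraph (Fin n) :=
  SimpleGraph.fromRel (fun x y =>
    (x.val < n - d ∧ y.val < n - d) ∨ (x.val < d ∧ n - d ≤ y.val))

/-- The graph `K'_{n,d}`: an edge-disjoint union of a clique on `{0,…,n-d-1}` and a clique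
on `{n-d-1,…,n-1}` sharing the single vertex `n-d-1`. -/
def Knd' (n d : ℕ) : SimpleGraph (Fin n) :=
  SimpleGraph.fromRel (fun x y =>
    (x.val < n - d ∧ y.val < n - d) ∨ (n - d - 1 ≤ x.val ∧ n - d - 1 ≤ y.val))

/-- The number of labeled copies of `F` in `G`: injections of vertex sets mapping
edges of `F` to edges of `G`. -/
noncomputable def labeledCopies {α β : Type*} [Fintype α] [Fintype β]
    (G : SimpleGraph β) (F : SimpleGraph α) : ℕ :=
  Nat.card {φ : α ↪ β // ∀ x y, F.Adj x y → G.Adj (φ x) (φ y)}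

namespace KHAux

open Finset Function

attribute [local instance] Classical.propDecidable

/-! ### Pure arithmetic lemmas about descending factorials -/

lemma desc_mono {a b : ℕ} (k : ℕ) (h : a ≤ b) :
    a.descFactorial k ≤ b.descFactorial k := by
  induction k with
  | zero => simp
  | succ k ih =>
      rw [Nat.descFactorial_succ, Nat.descFactorial_succ]
      exact Nat.mul_le_mul (by omega) ih

lemma desc_add (d a b : ℕ) :
    d.descFactorial (a + b) = d.descFactorial a * (d - a).descFactorial b := by
  induction b with
  | zero => simp
  | succ b ih =>
      rw [Nat.add_succ, Nat.descFactorial_succ, ih, Nat.descFactorial_succ]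
      have : d - (a + b) = d - a - b := by omega
      rw [this, mul_left_comm]

lemma desc_top (d k : ℕ) (hd : 1 ≤ d) :
    d.descFactorial (k + 1) = d * (d - 1).descFactorial k := by
  obtain ⟨e, rfl⟩ : ∃ e, d = e + 1 := ⟨d - 1, by omega⟩
  rw [Nat.succ_descFactorial_succ]
  simp

/-- `[m]_J + 2[m-1]_{J-1} ≤ 2[m-1]_J` when `2J+2 ≤ m`, `J ≥ 1`. -/
lemma A2' {m J : ℕ} (hJ : 1 ≤ J) (hm : 2 * J + 2 ≤ m) :
    m.descFactorial J + 2 * (m - 1).descFactorial (J - 1) ≤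
      2 * (m - 1).descFactorial J := by
  obtain ⟨J', rfl⟩ : ∃ J', J = J' + 1 := ⟨J - 1, by omega⟩
  obtain ⟨m', rfl⟩ : ∃ m', m = m' + 1 := ⟨m - 1, by omega⟩
  rw [Nat.succ_descFactorial_succ, Nat.descFactorial_succ]
  simp only [Nat.add_sub_cancel]
  have h1 : m' + 1 + 2 ≤ 2 * (m' - J') := by omega
  nlinarith [Nat.zero_le (m'.descFactorial J')]

lemma Astep (d x J : ℕ) (h : (2 * d + 1) * J + 2 * d ≤ x) :
    2 * d * ((x + 1).descFactorial J) ≤ (2 * d + 1) * (x.descFactorial J) := by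
  cases J with
  | zero => simpa using by omega
  | succ J' =>
      rw [Nat.succ_descFactorial_succ, Nat.descFactorial_succ]
      have key : 2 * d * (x + 1) ≤ (2 * d + 1) * (x - J') := by nlinarith [Nat.sub_add_cancel (show J' ≤ x by nlinarith)]
      calc 2 * d * ((x + 1) * x.descFactorial J')
          = (2 * d * (x + 1)) * x.descFactorial J' := by ring
        _ ≤ ((2 * d + 1) * (x - J')) * x.descFactorial J' :=
            Nat.mul_le_mul_right _ key
        _ = (2 * d + 1) * ((x - J') * x.descFactorial J') := by ring

lemma Aiter (d m J c : ℕ) (h : (2 * d + 1) * J + 2 * d + c + 1 ≤ m) :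
    (2 * d) ^ c * (m - 1).descFactorial J ≤
      (2 * d + 1) ^ c * (m - 1 - c).descFactorial J := by
  induction c with
  | zero => simp
  | succ c ih =>
      have ih' := ih (by omega)
      have hstep : 2 * d * ((m - 1 - c).descFactorial J) ≤
          (2 * d + 1) * ((m - 1 - (c+1)).descFactorial J) := by
        have hx : m - 1 - c = (m - (c + 2)) + 1 := by omega
        have hx2 : m - 1 - (c + 1) = m - (c + 2) := by omega
        rw [hx, hx2]
        exact Astep d _ J (by omega)
      calc (2 * d) ^ (c + 1) * (m - 1).descFactorial J
          = 2 * d * ((2 * d) ^ c * (m - 1).descFactorial J) := by ring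
        _ ≤ 2 * d * ((2 * d + 1) ^ c * (m - 1 - c).descFactorial J) :=
            Nat.mul_le_mul_left _ ih'
        _ = (2 * d + 1) ^ c * (2 * d * (m - 1 - c).descFactorial J) := by ring
        _ ≤ (2 * d + 1) ^ c * ((2 * d + 1) * (m - 1 - (c+1)).descFactorial J) :=
            Nat.mul_le_mul_left _ hstep
        _ = (2 * d + 1) ^ (c + 1) * (m - 1 - (c+1)).descFactorial J := by ring

lemma A5 (d c : ℕ) : (2 * d + 1) ^ c * (2 * d - (c + 1)) ≤ (2 * d) ^ (c + 1) := by
  induction c with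
  | zero => simpa using by omega
  | succ c ih =>
      rcases le_or_gt (2 * d) (c + 2) with h | h
      · have : 2 * d - (c + 2) = 0 := by omega
        simp [this]
      · have key : (2 * d + 1) * (2 * d - (c + 2)) ≤ 2 * d * (2 * d - (c + 1)) := by
          have he : 2 * d - (c + 1) = (2 * d - (c + 2)) + 1 := by omega
          rw [he]
          have he2 : 2 * d - (c + 2) ≤ 2 * d := by omega
          nlinarith
        calc (2 * d + 1) ^ (c + 1) * (2 * d - (c + 2))
            = (2 * d + 1) ^ c * ((2 * d + 1) * (2 * d - (c + 2))) := by ring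
          _ ≤ (2 * d + 1) ^ c * (2 * d * (2 * d - (c + 1))) :=
              Nat.mul_le_mul_left _ key
          _ = 2 * d * ((2 * d + 1) ^ c * (2 * d - (c + 1))) := by ring
          _ ≤ 2 * d * (2 * d) ^ (c + 1) := Nat.mul_le_mul_left _ ih
          _ = (2 * d) ^ (c + 2) := by ring

lemma A6 {d κ m J : ℕ} (hd : 1 ≤ d) (hκ : 1 ≤ κ)
    (h : (2 * d + 1) * J + 2 * d + κ ≤ m) :
    (2 * d - κ) * (m - 1).descFactorial J ≤ 2 * d * ((m - κ).descFactorial J) := by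
  have h1 : (2 * d) ^ (κ - 1) * (m - 1).descFactorial J ≤
      (2 * d + 1) ^ (κ - 1) * (m - κ).descFactorial J := by
    have := Aiter d m J (κ - 1) (by omega)
    have he : m - 1 - (κ - 1) = m - κ := by omega
    rwa [he] at this
  have h2 : (2 * d + 1) ^ (κ - 1) * (2 * d - κ) ≤ (2 * d) ^ κ := by
    have := A5 d (κ - 1)
    have he : κ - 1 + 1 = κ := by omega
    rwa [he] at this
  have key : (2 * d) ^ (κ - 1) * ((2 * d - κ) * (m - 1).descFactorial J) ≤
      (2 * d) ^ (κ - 1) * (2 * d * ((m - κ).descFactorial J)) := by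
    calc (2 * d) ^ (κ - 1) * ((2 * d - κ) * (m - 1).descFactorial J)
        = (2 * d - κ) * ((2 * d) ^ (κ - 1) * (m - 1).descFactorial J) := by ring
      _ ≤ (2 * d - κ) * ((2 * d + 1) ^ (κ - 1) * (m - κ).descFactorial J) :=
          Nat.mul_le_mul_left _ h1
      _ = ((2 * d + 1) ^ (κ - 1) * (2 * d - κ)) * (m - κ).descFactorial J := by ring
      _ ≤ (2 * d) ^ κ * (m - κ).descFactorial J := Nat.mul_le_mul_right _ h2
      _ = (2 * d) ^ (κ - 1) * (2 * d * ((m - κ).descFactorial J)) := by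
          have hp : (2 * d) ^ κ = (2 * d) ^ (κ - 1) * (2 * d) := by
            rw [← pow_succ]; congr 1; omega
          rw [hp]; ring
  exact Nat.le_of_mul_le_mul_left key (by positivity)

/-- The main arithmetic inequality, case `κ = 1`. -/
lemma spade1 {d s m J : ℕ} (hs : 1 ≤ s) (hm : 2 * J + 2 ≤ m) :
    2 * (d.descFactorial s * (m - 1).descFactorial J)
      + d.descFactorial (s + 1) * m.descFactorial J
      + 2 * (if J = 0 then 0 else d.descFactorial (s + 1) * (m - 1).descFactorial (J - 1))
      ≤ 2 * (d.descFactorial s * (d * (m - 1).descFactorial J)) := by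
  rcases Nat.eq_zero_or_pos d with rfl | hd
  · obtain ⟨s', rfl⟩ : ∃ s', s = s' + 1 := ⟨s - 1, by omega⟩
    simp [Nat.descFactorial_succ]
  rcases le_or_gt d s with hds | hds
  · have h0 : d.descFactorial (s + 1) = 0 := by
      rw [desc_add d s 1, Nat.descFactorial_one]
      have : d - s = 0 := by omega
      rw [this, mul_zero]
    rw [h0]
    simp only [zero_mul, mul_zero, add_zero, ite_self]
    have : d.descFactorial s * (m - 1).descFactorial J ≤
        d.descFactorial s * (d * (m - 1).descFactorial J) := by
      apply Nat.mul_le_mul_left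
      exact Nat.le_mul_of_pos_left _ hd
    omega
  · -- s < d, so d ≥ s + 1 ≥ 2
    have hsplit : d.descFactorial (s + 1) = d.descFactorial s * (d - s) := by
      rw [desc_add d s 1, Nat.descFactorial_one]
    have key : (d - s) * (m.descFactorial J
        + 2 * (if J = 0 then 0 else (m - 1).descFactorial (J - 1)))
        ≤ (2 * d - 2) * (m - 1).descFactorial J := by
      rcases Nat.eq_zero_or_pos J with rfl | hJ
      · simp only [reduceIte, mul_zero, add_zero, Nat.descFactorial_zero, mul_one]
        omega
      · rw [if_neg (by omega)]
        calc (d - s) * (m.descFactorial J + 2 * ((m - 1).descFactorial (J - 1)))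
            ≤ (d - s) * (2 * (m - 1).descFactorial J) :=
              Nat.mul_le_mul_left _ (A2' hJ hm)
          _ = ((d - s) * 2) * (m - 1).descFactorial J := by ring
          _ ≤ (2 * d - 2) * (m - 1).descFactorial J :=
              Nat.mul_le_mul_right _ (by omega)
    have key2 : d.descFactorial s * ((d - s) * (m.descFactorial J
        + 2 * (if J = 0 then 0 else (m - 1).descFactorial (J - 1))))
        ≤ d.descFactorial s * ((2 * d - 2) * (m - 1).descFactorial J) :=
      Nat.mul_le_mul_left _ key
    have expand : 2 * (d.descFactorial s * (d * (m - 1).descFactorial J)) =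
        2 * (d.descFactorial s * (m - 1).descFactorial J)
          + d.descFactorial s * ((2 * d - 2) * (m - 1).descFactorial J) := by
      have h2 : 2 * d = 2 + (2 * d - 2) := by omega
      calc 2 * (d.descFactorial s * (d * (m - 1).descFactorial J))
          = d.descFactorial s * ((2 * d) * (m - 1).descFactorial J) := by ring
        _ = d.descFactorial s * ((2 + (2 * d - 2)) * (m - 1).descFactorial J) := by
            rw [← h2]
        _ = 2 * (d.descFactorial s * (m - 1).descFactorial J)
            + d.descFactorial s * ((2 * d - 2) * (m - 1).descFactorial J) := by ring
    rw [expand, hsplit]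
    rcases Nat.eq_zero_or_pos J with rfl | hJ
    · simp only [reduceIte, mul_zero, add_zero, Nat.descFactorial_zero, mul_one] at key2 ⊢
      nlinarith
    · rw [if_neg (by omega)] at key2 ⊢
      nlinarith

/-- The main arithmetic inequality, case `κ ≥ 2`. -/
lemma spade2 {d s κ m J : ℕ} (hs : 1 ≤ s) (hκ : 2 ≤ κ)
    (hm1 : 2 * J + 2 ≤ m) (hm2 : (2 * d + 1) * J + 2 * d + κ ≤ m) :
    d.descFactorial (s + κ) * m.descFactorial J
      + 2 * (if J = 0 then 0 else d.descFactorial (s + κ) * (m - 1).descFactorial (J - 1))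
      + κ * (d.descFactorial (s + κ - 1) * (m - 1).descFactorial J)
      ≤ 2 * (d.descFactorial s * (d.descFactorial κ * ((m - κ).descFactorial J))) := by
  rcases Nat.eq_zero_or_pos d with rfl | hd
  · obtain ⟨a, ha⟩ : ∃ a, s + κ = a + 1 := ⟨s + κ - 1, by omega⟩
    obtain ⟨b, hb⟩ : ∃ b, s + κ - 1 = b + 1 := ⟨s + κ - 2, by omega⟩
    rw [hb, ha]
    simp [Nat.descFactorial_succ]
  have hsplitκ : d.descFactorial (s + κ) =
      d.descFactorial s * (d - s).descFactorial κ := desc_add d s κ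
  have hsplitκ1 : d.descFactorial (s + κ - 1) =
      d.descFactorial s * (d - s).descFactorial (κ - 1) := by
    have : s + κ - 1 = s + (κ - 1) := by omega
    rw [this, desc_add d s (κ - 1)]
  have hκtop : (d - s).descFactorial κ =
      (d - s - (κ - 1)) * (d - s).descFactorial (κ - 1) := by
    have : κ = (κ - 1) + 1 := by omega
    rw [this, Nat.descFactorial_succ, Nat.add_sub_cancel]
  have hdκ : d.descFactorial κ = d * (d - 1).descFactorial (κ - 1) := by
    have : κ = (κ - 1) + 1 := by omega
    rw [this, desc_top d (κ - 1) hd, Nat.add_sub_cancel]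
  have hmono : (d - s).descFactorial (κ - 1) ≤ (d - 1).descFactorial (κ - 1) :=
    desc_mono _ (by omega)
  have C1 : m.descFactorial J
      + 2 * (if J = 0 then 0 else (m - 1).descFactorial (J - 1))
      ≤ 2 * (m - 1).descFactorial J := by
    rcases Nat.eq_zero_or_pos J with rfl | hJ
    · simp
    · rw [if_neg (by omega)]
      exact A2' hJ hm1
  have hA6 : (2 * d - κ) * (m - 1).descFactorial J
      ≤ 2 * d * ((m - κ).descFactorial J) := A6 hd (by omega) hm2
  -- pull the ite factor out
  have hite : (if J = 0 then 0 else d.descFactorial (s + κ) * (m - 1).descFactorial (J - 1))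
      = d.descFactorial (s + κ) * (if J = 0 then 0 else (m - 1).descFactorial (J - 1)) := by
    rcases Nat.eq_zero_or_pos J with rfl | hJ
    · simp
    · rw [if_neg (by omega), if_neg (by omega)]
  rw [hite]
  rcases lt_or_ge (d - s) (κ - 1) with hz | hz
  · have h0 : (d - s).descFactorial (κ - 1) = 0 :=
      Nat.descFactorial_eq_zero_iff_lt.2 hz
    have h00 : (d - s).descFactorial κ = 0 :=
      Nat.descFactorial_eq_zero_iff_lt.2 (by omega)
    rw [hsplitκ, hsplitκ1, h0, h00]
    simp
  have coef : 2 * (d - s - (κ - 1)) + κ ≤ 2 * d - κ := by omega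
  calc d.descFactorial (s + κ) * m.descFactorial J
        + 2 * (d.descFactorial (s + κ) *
          (if J = 0 then 0 else (m - 1).descFactorial (J - 1)))
        + κ * (d.descFactorial (s + κ - 1) * (m - 1).descFactorial J)
      = d.descFactorial s * ((d - s).descFactorial κ * (m.descFactorial J
          + 2 * (if J = 0 then 0 else (m - 1).descFactorial (J - 1)))
          + κ * ((d - s).descFactorial (κ - 1) * (m - 1).descFactorial J)) := by
        rw [hsplitκ, hsplitκ1]; ring
    _ ≤ d.descFactorial s * ((d - s).descFactorial κ * (2 * (m - 1).descFactorial J)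
          + κ * ((d - s).descFactorial (κ - 1) * (m - 1).descFactorial J)) := by
        apply Nat.mul_le_mul_left
        exact Nat.add_le_add_right (Nat.mul_le_mul_left _ C1) _
    _ = d.descFactorial s * ((d - s).descFactorial (κ - 1) *
          ((2 * (d - s - (κ - 1)) + κ) * (m - 1).descFactorial J)) := by
        rw [hκtop]; ring
    _ ≤ d.descFactorial s * ((d - 1).descFactorial (κ - 1) *
          ((2 * d - κ) * (m - 1).descFactorial J)) := by
        apply Nat.mul_le_mul_left
        exact Nat.mul_le_mul hmono (Nat.mul_le_mul_right _ coef)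
    _ ≤ d.descFactorial s * ((d - 1).descFactorial (κ - 1) *
          (2 * d * ((m - κ).descFactorial J))) := by
        apply Nat.mul_le_mul_left
        exact Nat.mul_le_mul_left _ hA6
    _ = 2 * (d.descFactorial s * (d.descFactorial κ * ((m - κ).descFactorial J))) := by
        rw [hdκ]; ring


/-! ### Structural development -/

section Structural

open SimpleGraph

variable {t : ℕ}

/-- independence of a finite vertex set -/
def IndepOn (F : SimpleGraph (Fin t)) (S : Finset (Fin t)) : Prop :=
  ∀ ⦃x⦄, x ∈ S → ∀ ⦃y⦄, y ∈ S → ¬ F.Adj x y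

/-- outside neighbourhood -/
noncomputable def KK (F : SimpleGraph (Fin t)) (I : Finset (Fin t)) : Finset (Fin t) :=
  Finset.univ.filter fun z => z ∉ I ∧ ∃ x ∈ I, F.Adj z x

lemma KK_disj (F : SimpleGraph (Fin t)) (I : Finset (Fin t)) :
    Disjoint I (KK F I) := by
  rw [Finset.disjoint_right]
  intro z hz
  exact ((Finset.mem_filter.1 hz).2).1

/-! #### Greedy maximal independent subsets -/

noncomputable def gstep (F : SimpleGraph (Fin t)) (acc : Finset (Fin t)) (x : Fin t) :
    Finset (Fin t) :=
  if ∀ y ∈ acc, ¬ F.Adj x y then insert x acc else acc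

lemma gstep_subset (F : SimpleGraph (Fin t)) (acc : Finset (Fin t)) (x : Fin t) :
    acc ⊆ gstep F acc x := by
  unfold gstep; split
  · exact Finset.subset_insert _ _
  · exact Finset.Subset.refl _

noncomputable def greedyI (F : SimpleGraph (Fin t)) (S : Finset (Fin t)) (w : Fin t) :
    Finset (Fin t) :=
  (S.sort (· ≤ ·)).foldl (gstep F) {w}

lemma foldl_gstep_subset (F : SimpleGraph (Fin t)) :
    ∀ (L : List (Fin t)) (acc : Finset (Fin t)), acc ⊆ L.foldl (gstep F) acc := by
  intro L
  induction L with
  | nil => intro acc; exact Finset.Subset.refl _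
  | cons a L ih =>
      intro acc
      exact (gstep_subset F acc a).trans (ih _)

lemma foldl_gstep_mem (F : SimpleGraph (Fin t)) :
    ∀ (L : List (Fin t)) (acc : Finset (Fin t)) (z : Fin t),
      z ∈ L.foldl (gstep F) acc → z ∈ acc ∨ z ∈ L := by
  intro L
  induction L with
  | nil => intro acc z hz; exact Or.inl hz
  | cons a L ih =>
      intro acc z hz
      rcases ih _ z hz with h | h
      · unfold gstep at h
        split at h
        · rcases Finset.mem_insert.1 h with rfl | h
          · exact Or.inr List.mem_cons_self
          · exact Or.inl h
        · exact Or.inl h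
      · exact Or.inr (List.mem_cons_of_mem _ h)

lemma mem_greedyI (F : SimpleGraph (Fin t)) (S : Finset (Fin t)) (w : Fin t) :
    w ∈ greedyI F S w :=
  foldl_gstep_subset F _ _ (Finset.mem_singleton_self _)

lemma greedyI_subset {F : SimpleGraph (Fin t)} {S : Finset (Fin t)} {w : Fin t}
    (hw : w ∈ S) : greedyI F S w ⊆ S := by
  intro z hz
  rcases foldl_gstep_mem F _ _ z hz with h | h
  · rwa [Finset.mem_singleton.1 h]
  · exact (Finset.mem_sort _).1 h

lemma greedyI_indep (F : SimpleGraph (Fin t)) (S : Finset (Fin t)) (w : Fin t) :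
    IndepOn F (greedyI F S w) := by
  have H : ∀ (L : List (Fin t)) (acc : Finset (Fin t)),
      IndepOn F acc → IndepOn F (L.foldl (gstep F) acc) := by
    intro L
    induction L with
    | nil => intro acc h; exact h
    | cons a L ih =>
        intro acc h
        apply ih
        unfold gstep
        split
        · rename_i hcond
          intro x hx y hy hadj
          have hx' := Finset.mem_insert.1 hx
          have hy' := Finset.mem_insert.1 hy
          rcases hx' with hxa | hxm
          · rcases hy' with hya | hym
            · subst hxa; subst hya; exact F.irrefl hadj
            · subst hxa; exact hcond y hym hadj
          · rcases hy' with hya | hym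
            · subst hya; exact hcond x hxm hadj.symm
            · exact h hxm hym hadj
        · exact h
  refine H _ _ ?_
  intro x hx y hy hadj
  rw [Finset.mem_singleton.1 hx, Finset.mem_singleton.1 hy] at hadj
  exact F.irrefl hadj

lemma greedyI_dom {F : SimpleGraph (Fin t)} {S : Finset (Fin t)} {w : Fin t} :
    ∀ z ∈ S, z ∉ greedyI F S w → ∃ y ∈ greedyI F S w, F.Adj z y := by
  have H : ∀ (L : List (Fin t)) (acc : Finset (Fin t)) (z : Fin t),
      z ∈ L → z ∉ L.foldl (gstep F) acc →
        ∃ y ∈ L.foldl (gstep F) acc, F.Adj z y := by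
    intro L
    induction L with
    | nil => intro acc z hz; exact absurd hz List.not_mem_nil
    | cons a L ih =>
        intro acc z hz hnz
        rcases List.mem_cons.1 hz with rfl | hz
        · by_cases hcond : ∀ y ∈ acc, ¬ F.Adj z y
          · exfalso
            apply hnz
            have h1 : z ∈ gstep F acc z := by
              unfold gstep; rw [if_pos hcond]; exact Finset.mem_insert_self _ _
            exact foldl_gstep_subset F L _ h1
          · push_neg at hcond
            obtain ⟨y, hy, hadj⟩ := hcond
            exact ⟨y, foldl_gstep_subset F L _ ((gstep_subset F acc z) hy), hadj⟩
        · exact ih _ z hz hnz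
  intro z hz hnz
  exact H _ _ z ((Finset.mem_sort _).2 hz) hnz

/-! #### canonical edge of a non-independent set -/

lemma not_indep_edge {F : SimpleGraph (Fin t)} {S : Finset (Fin t)}
    (h : ¬ IndepOn F S) : (S.filter fun a => ∃ b ∈ S, F.Adj a b).Nonempty := by
  rw [IndepOn] at h
  push_neg at h
  obtain ⟨x, hx, y, hy, hadj⟩ := h
  exact ⟨x, Finset.mem_filter.2 ⟨hx, y, hy, hadj⟩⟩

noncomputable def pOf (F : SimpleGraph (Fin t)) (S : Finset (Fin t))
    (h : ¬ IndepOn F S) : Fin t :=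
  (S.filter fun a => ∃ b ∈ S, F.Adj a b).min' (not_indep_edge h)

lemma pOf_spec {F : SimpleGraph (Fin t)} {S : Finset (Fin t)} (h : ¬ IndepOn F S) :
    pOf F S h ∈ S ∧ ∃ b ∈ S, F.Adj (pOf F S h) b :=
  Finset.mem_filter.1 (Finset.min'_mem _ _)

lemma qOf_aux {F : SimpleGraph (Fin t)} {S : Finset (Fin t)} (h : ¬ IndepOn F S) :
    (S.filter fun b => F.Adj (pOf F S h) b).Nonempty := by
  obtain ⟨-, b, hb, hadj⟩ := pOf_spec h
  exact ⟨b, Finset.mem_filter.2 ⟨hb, hadj⟩⟩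

noncomputable def qOf (F : SimpleGraph (Fin t)) (S : Finset (Fin t))
    (h : ¬ IndepOn F S) : Fin t :=
  (S.filter fun b => F.Adj (pOf F S h) b).min' (qOf_aux h)

lemma qOf_spec {F : SimpleGraph (Fin t)} {S : Finset (Fin t)} (h : ¬ IndepOn F S) :
    qOf F S h ∈ S ∧ F.Adj (pOf F S h) (qOf F S h) :=
  Finset.mem_filter.1 (Finset.min'_mem _ _)

/-! #### the two graphs and their embeddings -/

variable {m d : ℕ}

lemma adjK_iff (a b : Fin (m + d)) :
    (Knd' (m + d) d).Adj a b ↔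
      a ≠ b ∧ ((a.val < m ∧ b.val < m) ∨ (m - 1 ≤ a.val ∧ m - 1 ≤ b.val)) := by
  have hmd : m + d - d = m := by omega
  rw [Knd', SimpleGraph.fromRel_adj, hmd]
  tauto

lemma adjH_iff (a b : Fin (m + d)) :
    (Hnd (m + d) d).Adj a b ↔
      a ≠ b ∧ ((a.val < m ∧ b.val < m) ∨ (a.val < d ∧ m ≤ b.val) ∨
        (b.val < d ∧ m ≤ a.val)) := by
  have hmd : m + d - d = m := by omega
  rw [Hnd, SimpleGraph.fromRel_adj, hmd]
  tauto

/-- the set of vertices sent into the top part `B` -/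
noncomputable def SB (φ : Fin t ↪ Fin (m + d)) : Finset (Fin t) :=
  Finset.univ.filter fun x => m ≤ (φ x).val

lemma mem_SB {φ : Fin t ↪ Fin (m + d)} {x : Fin t} :
    x ∈ SB φ ↔ m ≤ (φ x).val := by
  unfold SB; simp

abbrev EK (m d : ℕ) (F : SimpleGraph (Fin t)) :=
  {φ : Fin t ↪ Fin (m + d) // ∀ x y, F.Adj x y → (Knd' (m + d) d).Adj (φ x) (φ y)}

abbrev EH (m d : ℕ) (F : SimpleGraph (Fin t)) :=
  {φ : Fin t ↪ Fin (m + d) // ∀ x y, F.Adj x y → (Hnd (m + d) d).Adj (φ x) (φ y)}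

variable {F : SimpleGraph (Fin t)}

lemma val_big {φ : Fin t ↪ Fin (m + d)}
    (hφ : ∀ x y, F.Adj x y → (Knd' (m + d) d).Adj (φ x) (φ y))
    {x y : Fin t} (hx : x ∈ SB φ) (hadj : F.Adj x y) : m - 1 ≤ (φ y).val := by
  have h := hφ x y hadj
  rw [adjK_iff] at h
  have hx' : m ≤ (φ x).val := mem_SB.1 hx
  rcases h.2 with ⟨h1, -⟩ | ⟨-, h2⟩
  · omega
  · exact h2

lemma val_out {φ : Fin t ↪ Fin (m + d)}
    (hφ : ∀ x y, F.Adj x y → (Knd' (m + d) d).Adj (φ x) (φ y))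
    {x y : Fin t} (hx : x ∈ SB φ) (hadj : F.Adj x y) (hy : y ∉ SB φ) :
    (φ y).val = m - 1 := by
  have h1 := val_big hφ hx hadj
  have h2 : ¬ m ≤ (φ y).val := fun hc => hy (mem_SB.2 hc)
  omega

/-- the assignment of embedded copies to independent sets -/
noncomputable def theta (φ : EK m d F) : Finset (Fin t) :=
  if h : IndepOn F (SB φ.1) then SB φ.1
  else greedyI F (SB φ.1)
    (if ((φ.1 (pOf F (SB φ.1) h)).val < (φ.1 (qOf F (SB φ.1) h)).val)
     then pOf F (SB φ.1) h else qOf F (SB φ.1) h)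

lemma theta_indep (φ : EK m d F) : IndepOn F (theta φ) := by
  unfold theta
  split
  · assumption
  · exact greedyI_indep _ _ _

/-! #### counting upper bounds for classes of `K'`-embeddings -/

lemma card_class_le (S : Finset (Fin t)) :
    (Finset.univ.filter fun φ : EK m d F => SB φ.1 = S).card ≤
      d.descFactorial S.card * m.descFactorial (t - S.card) := by
  classical
  rw [← Fintype.card_subtype]
  have h2 : d.descFactorial S.card * m.descFactorial (t - S.card)
      = Fintype.card ((↥S ↪ Fin d) ×
          (↥((Finset.univ : Finset (Fin t)) \ S) ↪ Fin m)) := by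
    rw [Fintype.card_prod, Fintype.card_embedding_eq, Fintype.card_embedding_eq,
      Fintype.card_coe, Fintype.card_coe, Fintype.card_fin, Fintype.card_fin,
      Finset.card_sdiff_of_subset (Finset.subset_univ S), Finset.card_univ, Fintype.card_fin]
  rw [h2]
  have hSB : ∀ (ψ : {φ : EK m d F // SB φ.1 = S}) (x : Fin t), x ∈ S →
      m ≤ (ψ.1.1 x).val := by
    intro ψ x hx
    have hx' : x ∈ SB ψ.1.1 := by rw [ψ.2]; exact hx
    exact mem_SB.1 hx'
  have hSB' : ∀ (ψ : {φ : EK m d F // SB φ.1 = S}) (x : Fin t), x ∉ S →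
      (ψ.1.1 x).val < m := by
    intro ψ x hx
    by_contra hc
    push_neg at hc
    have hx' : x ∈ SB ψ.1.1 := mem_SB.2 hc
    rw [ψ.2] at hx'
    exact hx hx'
  refine Fintype.card_le_of_injective (fun ψ =>
    (⟨fun x => ⟨(ψ.1.1 x.1).val - m, by
        have h1 := hSB ψ x.1 x.2
        have h2 := (ψ.1.1 x.1).isLt
        omega⟩, by
        intro a b hab
        have hval : (ψ.1.1 a.1).val - m = (ψ.1.1 b.1).val - m := congrArg Fin.val hab
        have ha := hSB ψ a.1 a.2
        have hb := hSB ψ b.1 b.2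
        have hfe : ψ.1.1 a.1 = ψ.1.1 b.1 := Fin.ext (by omega)
        exact Subtype.ext (ψ.1.1.injective hfe)⟩,
     ⟨fun y => ⟨(ψ.1.1 y.1).val, hSB' ψ y.1 (Finset.mem_sdiff.1 y.2).2⟩, by
        intro a b hab
        have hval := congrArg Fin.val hab
        exact Subtype.ext (ψ.1.1.injective (Fin.ext hval))⟩)) ?_
  intro ψ ψ' heq
  have h1 := congrArg Prod.fst heq
  have h2 := congrArg Prod.snd heq
  apply Subtype.ext
  apply Subtype.ext
  apply DFunLike.ext
  intro x
  by_cases hx : x ∈ S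
  · have hcc := congrFun (congrArg (DFunLike.coe) h1) ⟨x, hx⟩
    have hval : (ψ.1.1 x).val - m = (ψ'.1.1 x).val - m := congrArg Fin.val hcc
    have ha := hSB ψ x hx
    have hb := hSB ψ' x hx
    exact Fin.ext (by omega)
  · have hx2 : x ∈ Finset.univ \ S := Finset.mem_sdiff.2 ⟨Finset.mem_univ _, hx⟩
    have hcc := congrFun (congrArg (DFunLike.coe) h2) ⟨x, hx2⟩
    have hval := congrArg Fin.val hcc
    exact Fin.ext hval

lemma card_classv_le (S : Finset (Fin t)) (u : Fin t) (hu : u ∉ S) :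
    (Finset.univ.filter fun φ : EK m d F =>
        SB φ.1 = S ∧ (φ.1 u).val = m - 1).card ≤
      d.descFactorial S.card * (m - 1).descFactorial (t - S.card - 1) := by
  classical
  rw [← Fintype.card_subtype]
  have h2 : d.descFactorial S.card * (m - 1).descFactorial (t - S.card - 1)
      = Fintype.card ((↥S ↪ Fin d) ×
          (↥((Finset.univ : Finset (Fin t)) \ insert u S) ↪ Fin (m - 1))) := by
    have h3 : t - S.card - 1 = t - (S.card + 1) := by omega
    rw [h3, Fintype.card_prod, Fintype.card_embedding_eq, Fintype.card_embedding_eq,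
      Fintype.card_coe, Fintype.card_coe, Fintype.card_fin, Fintype.card_fin,
      Finset.card_sdiff_of_subset (Finset.subset_univ _), Finset.card_univ, Fintype.card_fin,
      Finset.card_insert_of_notMem hu]
  rw [h2]
  have hSB : ∀ (ψ : {φ : EK m d F // SB φ.1 = S ∧ (φ.1 u).val = m - 1})
      (x : Fin t), x ∈ S → m ≤ (ψ.1.1 x).val := by
    intro ψ x hx
    have hx' : x ∈ SB ψ.1.1 := by rw [ψ.2.1]; exact hx
    exact mem_SB.1 hx'
  have hSB' : ∀ (ψ : {φ : EK m d F // SB φ.1 = S ∧ (φ.1 u).val = m - 1})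
      (x : Fin t), x ∉ S → (ψ.1.1 x).val < m := by
    intro ψ x hx
    by_contra hc
    push_neg at hc
    have hx' : x ∈ SB ψ.1.1 := mem_SB.2 hc
    rw [ψ.2.1] at hx'
    exact hx hx'
  have hrest : ∀ (ψ : {φ : EK m d F // SB φ.1 = S ∧ (φ.1 u).val = m - 1})
      (x : Fin t), x ∉ insert u S → (ψ.1.1 x).val < m - 1 := by
    intro ψ x hx
    have hx1 : x ∉ S := fun hc => hx (Finset.mem_insert_of_mem hc)
    have hx2 : x ≠ u := fun hc => hx (hc ▸ Finset.mem_insert_self _ _)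
    have h3 := hSB' ψ x hx1
    have h4 : (ψ.1.1 x).val ≠ m - 1 := by
      intro hc
      have : ψ.1.1 x = ψ.1.1 u := Fin.ext (by rw [hc, ψ.2.2])
      exact hx2 (ψ.1.1.injective this)
    omega
  refine Fintype.card_le_of_injective (fun ψ =>
    (⟨fun x => ⟨(ψ.1.1 x.1).val - m, by
        have h1 := hSB ψ x.1 x.2
        have h2 := (ψ.1.1 x.1).isLt
        omega⟩, by
        intro a b hab
        have hval : (ψ.1.1 a.1).val - m = (ψ.1.1 b.1).val - m := congrArg Fin.val hab
        have ha := hSB ψ a.1 a.2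
        have hb := hSB ψ b.1 b.2
        have hfe : ψ.1.1 a.1 = ψ.1.1 b.1 := Fin.ext (by omega)
        exact Subtype.ext (ψ.1.1.injective hfe)⟩,
     ⟨fun y => ⟨(ψ.1.1 y.1).val, hrest ψ y.1 (Finset.mem_sdiff.1 y.2).2⟩, by
        intro a b hab
        have hval := congrArg Fin.val hab
        exact Subtype.ext (ψ.1.1.injective (Fin.ext hval))⟩)) ?_
  intro ψ ψ' heq
  have h1 := congrArg Prod.fst heq
  have h2 := congrArg Prod.snd heq
  apply Subtype.ext
  apply Subtype.ext
  apply DFunLike.ext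
  intro x
  by_cases hxu : x = u
  · subst hxu
    exact Fin.ext (by rw [ψ.2.2, ψ'.2.2])
  by_cases hx : x ∈ S
  · have hcc := congrFun (congrArg (DFunLike.coe) h1) ⟨x, hx⟩
    have hval : (ψ.1.1 x).val - m = (ψ'.1.1 x).val - m := congrArg Fin.val hcc
    have ha := hSB ψ x hx
    have hb := hSB ψ' x hx
    exact Fin.ext (by omega)
  · have hx2 : x ∈ Finset.univ \ insert u S := by
      rw [Finset.mem_sdiff]
      refine ⟨Finset.mem_univ _, ?_⟩
      rw [Finset.mem_insert]
      tauto
    have hcc := congrFun (congrArg (DFunLike.coe) h2) ⟨x, hx2⟩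
    have hval := congrArg Fin.val hcc
    exact Fin.ext hval

/-! #### the swapping involution and the halving bound -/

noncomputable def swapE (p q : Fin t) (φ : Fin t ↪ Fin (m + d)) :
    Fin t ↪ Fin (m + d) := (Equiv.swap p q).toEmbedding.trans φ

lemma swapE_apply (p q : Fin t) (φ : Fin t ↪ Fin (m + d)) (x : Fin t) :
    swapE p q φ x = φ (Equiv.swap p q x) := rfl

lemma swapE_swapE (p q : Fin t) (φ : Fin t ↪ Fin (m + d)) :
    swapE p q (swapE p q φ) = φ := by
  apply DFunLike.ext
  intro x
  rw [swapE_apply, swapE_apply, Equiv.swap_apply_self]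

lemma isK_swap {φ : Fin t ↪ Fin (m + d)}
    (hφ : ∀ x y, F.Adj x y → (Knd' (m + d) d).Adj (φ x) (φ y))
    {p q : Fin t} (hp : p ∈ SB φ) (hq : q ∈ SB φ) :
    ∀ x y, F.Adj x y → (Knd' (m + d) d).Adj (swapE p q φ x) (swapE p q φ y) := by
  intro x y hadj
  rw [swapE_apply, swapE_apply, adjK_iff]
  refine ⟨fun hc => hadj.ne ((Equiv.swap p q).injective (φ.injective hc)), ?_⟩
  have fact1 : ∀ z : Fin t, (z = p ∨ z = q) → m ≤ (φ (Equiv.swap p q z)).val := by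
    rintro z (rfl | rfl)
    · rw [Equiv.swap_apply_left]; exact mem_SB.1 hq
    · rw [Equiv.swap_apply_right]; exact mem_SB.1 hp
  have fact2 : ∀ z w : Fin t, F.Adj z w → (z = p ∨ z = q) →
      m - 1 ≤ (φ (Equiv.swap p q w)).val := by
    intro z w hzw hz
    by_cases hwp : w = p
    · subst hwp; have := fact1 w (Or.inl rfl); omega
    by_cases hwq : w = q
    · subst hwq; have := fact1 w (Or.inr rfl); omega
    rw [Equiv.swap_apply_of_ne_of_ne hwp hwq]
    rcases hz with rfl | rfl
    · exact val_big hφ hp hzw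
    · exact val_big hφ hq hzw
  by_cases hx : x = p ∨ x = q
  · right
    have h1 := fact1 x hx
    have h2 := fact2 x y hadj hx
    omega
  by_cases hy : y = p ∨ y = q
  · right
    have h1 := fact1 y hy
    have h2 := fact2 y x hadj.symm hy
    omega
  push_neg at hx hy
  rw [Equiv.swap_apply_of_ne_of_ne hx.1 hx.2, Equiv.swap_apply_of_ne_of_ne hy.1 hy.2]
  have h := hφ x y hadj
  rw [adjK_iff] at h
  exact h.2

lemma SB_swapE {φ : Fin t ↪ Fin (m + d)} {p q : Fin t}
    (hp : p ∈ SB φ) (hq : q ∈ SB φ) : SB (swapE p q φ) = SB φ := by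
  ext x
  rw [mem_SB, mem_SB, swapE_apply]
  by_cases hxp : x = p
  · subst hxp
    rw [Equiv.swap_apply_left]
    exact iff_of_true (mem_SB.1 hq) (mem_SB.1 hp)
  by_cases hxq : x = q
  · subst hxq
    rw [Equiv.swap_apply_right]
    exact iff_of_true (mem_SB.1 hp) (mem_SB.1 hq)
  rw [Equiv.swap_apply_of_ne_of_ne hxp hxq]

lemma theta_spec {φ : EK m d F} {S' : Finset (Fin t)} (hS : SB φ.1 = S')
    (hn : ¬ IndepOn F S') :
    theta φ = greedyI F S'
      (if ((φ.1 (pOf F S' hn)).val < (φ.1 (qOf F S' hn)).val)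
       then pOf F S' hn else qOf F S' hn) := by
  unfold theta
  simp only [hS, dif_neg hn]

lemma w_mem_theta {φ : EK m d F} {S' : Finset (Fin t)} (hS : SB φ.1 = S')
    (hn : ¬ IndepOn F S') :
    (if ((φ.1 (pOf F S' hn)).val < (φ.1 (qOf F S' hn)).val)
     then pOf F S' hn else qOf F S' hn) ∈ theta φ := by
  rw [theta_spec hS hn]
  exact mem_greedyI _ _ _

lemma halving_core (I S' W : Finset (Fin t)) (hW : ∀ w ∈ W, w ∉ S')
    (p q : Fin t) (hpS : p ∈ S') (hqS : q ∈ S')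
    (ho : ∀ φ : EK m d F, theta φ = I → SB φ.1 = S' →
      (φ.1 p).val < (φ.1 q).val) :
    2 * (Finset.univ.filter fun φ : EK m d F =>
        theta φ = I ∧ (SB φ.1 = S' ∧ ¬ IndepOn F S') ∧
          ∀ u ∈ W, (φ.1 u).val = m - 1).card ≤
    (Finset.univ.filter fun φ : EK m d F =>
        SB φ.1 = S' ∧ ∀ u ∈ W, (φ.1 u).val = m - 1).card := by
  classical
  set Apred : EK m d F → Prop := fun φ =>
    theta φ = I ∧ (SB φ.1 = S' ∧ ¬ IndepOn F S') ∧
      ∀ u ∈ W, (φ.1 u).val = m - 1 with hApred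
  set Cpred : EK m d F → Prop := fun φ =>
    SB φ.1 = S' ∧ ∀ u ∈ W, (φ.1 u).val = m - 1 with hCpred
  have hpSB : ∀ φ : {φ : EK m d F // Apred φ}, p ∈ SB φ.1.1 := by
    intro φ; rw [φ.2.2.1.1]; exact hpS
  have hqSB : ∀ φ : {φ : EK m d F // Apred φ}, q ∈ SB φ.1.1 := by
    intro φ; rw [φ.2.2.1.1]; exact hqS
  have swW : ∀ (φ : {φ : EK m d F // Apred φ}) (u : Fin t), u ∈ W →
      (swapE p q φ.1.1 u).val = m - 1 := by
    intro φ u hu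
    rw [swapE_apply, Equiv.swap_apply_of_ne_of_ne
      (fun hc => (hW u hu) (by rw [hc]; exact hpS))
      (fun hc => (hW u hu) (by rw [hc]; exact hqS))]
    exact φ.2.2.2 u hu
  let sw : {φ : EK m d F // Apred φ} → {φ : EK m d F // Cpred φ} := fun φ =>
    ⟨⟨swapE p q φ.1.1, isK_swap φ.1.2 (hpSB φ) (hqSB φ)⟩,
      ⟨by rw [SB_swapE (hpSB φ) (hqSB φ)]; exact φ.2.2.1.1, swW φ⟩⟩
  let pl : {φ : EK m d F // Apred φ} → {φ : EK m d F // Cpred φ} := fun φ =>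
    ⟨φ.1, ⟨φ.2.2.1.1, φ.2.2.2⟩⟩
  let g : {φ : EK m d F // Apred φ} × Bool → {φ : EK m d F // Cpred φ} :=
    fun x => cond x.2 (sw x.1) (pl x.1)
  have hg : Function.Injective g := by
    rintro ⟨a, ab⟩ ⟨c, cb⟩ heq
    have horia := ho a.1 a.2.1 a.2.2.1.1
    have horic := ho c.1 c.2.1 c.2.2.1.1
    cases ab <;> cases cb
    · have h1 : a.1.1 = c.1.1 :=
        congrArg (fun z : {φ : EK m d F // Cpred φ} => z.1.1) heq
      rw [Prod.ext_iff]
      exact ⟨Subtype.ext (Subtype.ext h1), rfl⟩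
    · exfalso
      have h1 : a.1.1 = swapE p q c.1.1 :=
        congrArg (fun z : {φ : EK m d F // Cpred φ} => z.1.1) heq
      have hp1 : a.1.1 p = c.1.1 q := by
        rw [h1, swapE_apply, Equiv.swap_apply_left]
      have hq1 : a.1.1 q = c.1.1 p := by
        rw [h1, swapE_apply, Equiv.swap_apply_right]
      rw [hp1, hq1] at horia
      omega
    · exfalso
      have h1 : swapE p q a.1.1 = c.1.1 :=
        congrArg (fun z : {φ : EK m d F // Cpred φ} => z.1.1) heq
      have hp1 : c.1.1 p = a.1.1 q := by
        rw [← h1, swapE_apply, Equiv.swap_apply_left]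
      have hq1 : c.1.1 q = a.1.1 p := by
        rw [← h1, swapE_apply, Equiv.swap_apply_right]
      rw [hp1, hq1] at horic
      omega
    · have h1 : swapE p q a.1.1 = swapE p q c.1.1 :=
        congrArg (fun z : {φ : EK m d F // Cpred φ} => z.1.1) heq
      have h2 : a.1.1 = c.1.1 := by
        have := congrArg (swapE p q) h1
        rwa [swapE_swapE, swapE_swapE] at this
      rw [Prod.ext_iff]
      exact ⟨Subtype.ext (Subtype.ext h2), rfl⟩
  calc 2 * (Finset.univ.filter fun φ : EK m d F => Apred φ).card
      = Fintype.card ({φ : EK m d F // Apred φ} × Bool) := by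
        rw [Fintype.card_prod, Fintype.card_bool, Fintype.card_subtype]
        ring
    _ ≤ Fintype.card {φ : EK m d F // Cpred φ} := Fintype.card_le_of_injective g hg
    _ = (Finset.univ.filter fun φ : EK m d F => Cpred φ).card :=
        Fintype.card_subtype _

lemma halving (I S' W : Finset (Fin t)) (hI : IndepOn F I)
    (hW : ∀ w ∈ W, w ∉ S') :
    2 * (Finset.univ.filter fun φ : EK m d F =>
        theta φ = I ∧ (SB φ.1 = S' ∧ ¬ IndepOn F S') ∧
          ∀ u ∈ W, (φ.1 u).val = m - 1).card ≤
    (Finset.univ.filter fun φ : EK m d F =>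
        SB φ.1 = S' ∧ ∀ u ∈ W, (φ.1 u).val = m - 1).card := by
  classical
  by_cases hni : IndepOn F S'
  · have hempty : (Finset.univ.filter fun φ : EK m d F =>
        theta φ = I ∧ (SB φ.1 = S' ∧ ¬ IndepOn F S') ∧
          ∀ u ∈ W, (φ.1 u).val = m - 1).card = 0 := by
      rw [Finset.card_eq_zero, Finset.filter_eq_empty_iff]
      rintro φ - ⟨-, ⟨-, h2⟩, -⟩
      exact h2 hni
    rw [hempty]
    omega
  have hpS : pOf F S' hni ∈ S' := (pOf_spec hni).1
  have hqS : qOf F S' hni ∈ S' := (qOf_spec hni).1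
  have hpq_adj : F.Adj (pOf F S' hni) (qOf F S' hni) := (qOf_spec hni).2
  have hpq_ne : pOf F S' hni ≠ qOf F S' hni := hpq_adj.ne
  -- each member's chosen endpoint lies in I
  have hwI : ∀ φ : EK m d F, theta φ = I → SB φ.1 = S' →
      (if ((φ.1 (pOf F S' hni)).val < (φ.1 (qOf F S' hni)).val)
       then pOf F S' hni else qOf F S' hni) ∈ I := by
    intro φ h1 h2
    have := w_mem_theta h2 hni
    rwa [h1] at this
  by_cases hpI : pOf F S' hni ∈ I
  · by_cases hqI : qOf F S' hni ∈ I
    · exact (hI hpI hqI hpq_adj).elim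
    -- p ∈ I, q ∉ I : all members satisfy (φ p).val < (φ q).val
    · refine halving_core I S' W hW (pOf F S' hni) (qOf F S' hni) hpS hqS ?_
      intro φ h1 h2
      have hw := hwI φ h1 h2
      by_contra hc
      rw [if_neg hc] at hw
      exact hqI hw
  · by_cases hqI : qOf F S' hni ∈ I
    · refine halving_core I S' W hW (qOf F S' hni) (pOf F S' hni) hqS hpS ?_
      intro φ h1 h2
      have hw := hwI φ h1 h2
      by_cases hlt : (φ.1 (pOf F S' hni)).val < (φ.1 (qOf F S' hni)).val
      · rw [if_pos hlt] at hw
        exact (hpI hw).elim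
      · have hne' : (φ.1 (pOf F S' hni)).val ≠ (φ.1 (qOf F S' hni)).val :=
          fun hc => hpq_ne (φ.1.injective (Fin.ext hc))
        omega
    · have hempty : (Finset.univ.filter fun φ : EK m d F =>
          theta φ = I ∧ (SB φ.1 = S' ∧ ¬ IndepOn F S') ∧
            ∀ u ∈ W, (φ.1 u).val = m - 1).card = 0 := by
        rw [Finset.card_eq_zero, Finset.filter_eq_empty_iff]
        rintro φ - ⟨h1, ⟨h2, -⟩, -⟩
        have := hwI φ h1 h2
        split at this
        · exact hpI this
        · exact hqI this
      rw [hempty]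
      omega

/-! #### lower bound for the number of `H`-embeddings in a fiber -/

lemma mem_KK {I : Finset (Fin t)} {z : Fin t} :
    z ∈ KK F I ↔ z ∉ I ∧ ∃ x ∈ I, F.Adj z x := by
  unfold KK; simp

lemma H_lower (hdm : d ≤ m) (I : Finset (Fin t)) (hI : IndepOn F I) :
    d.descFactorial I.card * (d.descFactorial (KK F I).card *
      ((m - (KK F I).card).descFactorial (t - I.card - (KK F I).card))) ≤
    (Finset.univ.filter fun ψ : EH m d F => SB ψ.1 = I).card := by
  classical
  set K := KK F I with hK
  set R := (Finset.univ : Finset (Fin t)) \ (I ∪ K) with hR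
  have hdisj : Disjoint I K := KK_disj F I
  have hmemR : ∀ x : Fin t, x ∉ I → x ∉ K → x ∈ R := by
    intro x h1 h2
    rw [hR, Finset.mem_sdiff, Finset.mem_union]
    exact ⟨Finset.mem_univ _, by tauto⟩
  have hcardR : R.card = t - I.card - K.card := by
    rw [hR, Finset.card_sdiff_of_subset (Finset.subset_univ _), Finset.card_univ,
      Fintype.card_fin, Finset.card_union_of_disjoint hdisj]
    omega
  rw [← Fintype.card_subtype]
  have hcard : d.descFactorial I.card * (d.descFactorial K.card *
      ((m - K.card).descFactorial (t - I.card - K.card)))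
      = Fintype.card ((↥I ↪ Fin d) × (↥K ↪ Fin d) × (↥R ↪ Fin (m - K.card))) := by
    simp only [Fintype.card_prod, Fintype.card_embedding_eq,
      Fintype.card_coe, Fintype.card_fin, hcardR]
  rw [hcard]
  -- the building blocks
  let bmap : (↥K ↪ Fin d) → (↥K → Fin m) := fun b z => ⟨(b z).val, by
    have := (b z).isLt; omega⟩
  have hbmap_inj : ∀ b, Function.Injective (bmap b) := by
    intro b z w hzw
    have hv := congrArg Fin.val hzw
    exact b.injective (Fin.ext hv)
  let cset : (↥K ↪ Fin d) → Finset (Fin m) := fun b =>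
    Finset.univ \ (Finset.univ.image (bmap b))
  have hccard : ∀ b, (cset b).card = m - K.card := by
    intro b
    rw [Finset.card_sdiff_of_subset (Finset.subset_univ _), Finset.card_univ,
      Fintype.card_fin, Finset.card_image_of_injective _ (hbmap_inj b),
      Finset.card_univ, Fintype.card_coe]
  let oE : (↥K ↪ Fin d) → (Fin (m - K.card) ↪o Fin m) := fun b =>
    (cset b).orderEmbOfFin (hccard b)
  let ψf : ((↥I ↪ Fin d) × (↥K ↪ Fin d) × (↥R ↪ Fin (m - K.card))) →
      Fin t → Fin (m + d) := fun e x =>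
    if hx : x ∈ I then ⟨m + (e.1 ⟨x, hx⟩).val, by have := (e.1 ⟨x, hx⟩).isLt; omega⟩
    else if hx2 : x ∈ K then ⟨(e.2.1 ⟨x, hx2⟩).val, by
      have := (e.2.1 ⟨x, hx2⟩).isLt; omega⟩
    else ⟨((oE e.2.1) (e.2.2 ⟨x, hmemR x hx hx2⟩)).val, by
      have := ((oE e.2.1) (e.2.2 ⟨x, hmemR x hx hx2⟩)).isLt; omega⟩
  -- range facts
  have hr1 : ∀ e x (hx : x ∈ I), (ψf e x).val = m + (e.1 ⟨x, hx⟩).val := by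
    intro e x hx
    simp only [ψf, dif_pos hx]
  have hr2 : ∀ e x (hx : x ∉ I) (hx2 : x ∈ K),
      (ψf e x).val = (e.2.1 ⟨x, hx2⟩).val := by
    intro e x hx hx2
    simp only [ψf, dif_neg hx, dif_pos hx2]
  have hr3 : ∀ e x (hx : x ∉ I) (hx2 : x ∉ K),
      (ψf e x).val = ((oE e.2.1) (e.2.2 ⟨x, hmemR x hx hx2⟩)).val := by
    intro e x hx hx2
    simp only [ψf, dif_neg hx, dif_neg hx2]
  have hlow : ∀ e x, x ∉ I → (ψf e x).val < m := by
    intro e x hx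
    by_cases hx2 : x ∈ K
    · rw [hr2 e x hx hx2]
      have := (e.2.1 ⟨x, hx2⟩).isLt
      omega
    · rw [hr3 e x hx hx2]
      exact ((oE e.2.1) (e.2.2 ⟨x, hmemR x hx hx2⟩)).isLt
  have hhigh : ∀ e x (hx : x ∈ I), m ≤ (ψf e x).val := by
    intro e x hx
    rw [hr1 e x hx]
    omega
  -- injectivity of each ψf e
  have hinj : ∀ e, Function.Injective (ψf e) := by
    intro e x y heq
    have hval : (ψf e x).val = (ψf e y).val := congrArg Fin.val heq
    by_cases hx : x ∈ I
    · by_cases hy : y ∈ I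
      · rw [hr1 e x hx, hr1 e y hy] at hval
        have : (⟨x, hx⟩ : ↥I) = ⟨y, hy⟩ := e.1.injective (Fin.ext (by omega))
        exact congrArg Subtype.val this
      · have := hlow e y hy
        have := hhigh e x hx
        omega
    · by_cases hy : y ∈ I
      · have := hlow e x hx
        have := hhigh e y hy
        omega
      · by_cases hx2 : x ∈ K
        · by_cases hy2 : y ∈ K
          · rw [hr2 e x hx hx2, hr2 e y hy hy2] at hval
            have : (⟨x, hx2⟩ : ↥K) = ⟨y, hy2⟩ := e.2.1.injective (Fin.ext hval)
            exact congrArg Subtype.val this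
          · exfalso
            rw [hr2 e x hx hx2, hr3 e y hy hy2] at hval
            have h1 : bmap e.2.1 ⟨x, hx2⟩ =
                (oE e.2.1) (e.2.2 ⟨y, hmemR y hy hy2⟩) := Fin.ext hval
            have h2 : (oE e.2.1) (e.2.2 ⟨y, hmemR y hy hy2⟩) ∈ cset e.2.1 :=
              Finset.orderEmbOfFin_mem _ _ _
            rw [← h1] at h2
            have h3 : bmap e.2.1 ⟨x, hx2⟩ ∈ Finset.univ.image (bmap e.2.1) :=
              Finset.mem_image_of_mem _ (Finset.mem_univ _)
            rw [Finset.mem_sdiff] at h2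
            exact h2.2 h3
        · by_cases hy2 : y ∈ K
          · exfalso
            rw [hr3 e x hx hx2, hr2 e y hy hy2] at hval
            have h1 : bmap e.2.1 ⟨y, hy2⟩ =
                (oE e.2.1) (e.2.2 ⟨x, hmemR x hx hx2⟩) := Fin.ext hval.symm
            have h2 : (oE e.2.1) (e.2.2 ⟨x, hmemR x hx hx2⟩) ∈ cset e.2.1 :=
              Finset.orderEmbOfFin_mem _ _ _
            rw [← h1] at h2
            have h3 : bmap e.2.1 ⟨y, hy2⟩ ∈ Finset.univ.image (bmap e.2.1) :=
              Finset.mem_image_of_mem _ (Finset.mem_univ _)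
            rw [Finset.mem_sdiff] at h2
            exact h2.2 h3
          · rw [hr3 e x hx hx2, hr3 e y hy hy2] at hval
            have h1 : e.2.2 ⟨x, hmemR x hx hx2⟩ = e.2.2 ⟨y, hmemR y hy hy2⟩ :=
              (oE e.2.1).injective (Fin.ext hval)
            have h2 : (⟨x, hmemR x hx hx2⟩ : ↥R) = ⟨y, hmemR y hy hy2⟩ :=
              e.2.2.injective h1
            exact congrArg Subtype.val h2
  -- adjacency
  have hadjH : ∀ e x y, F.Adj x y → (Hnd (m + d) d).Adj (ψf e x) (ψf e y) := by
    intro e x y hadj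
    rw [adjH_iff]
    refine ⟨fun hc => hadj.ne (hinj e hc), ?_⟩
    by_cases hx : x ∈ I
    · by_cases hy : y ∈ I
      · exact (hI hx hy hadj).elim
      · have hyK : y ∈ K := mem_KK.2 ⟨hy, x, hx, hadj.symm⟩
        right; right
        constructor
        · rw [hr2 e y hy hyK]
          exact (e.2.1 ⟨y, hyK⟩).isLt
        · exact hhigh e x hx
    · by_cases hy : y ∈ I
      · have hxK : x ∈ K := mem_KK.2 ⟨hx, y, hy, hadj⟩
        right; left
        constructor
        · rw [hr2 e x hx hxK]
          exact (e.2.1 ⟨x, hxK⟩).isLt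
        · exact hhigh e y hy
      · left
        exact ⟨hlow e x hx, hlow e y hy⟩
  -- the injection
  refine Fintype.card_le_of_injective (fun e =>
    ⟨⟨⟨ψf e, hinj e⟩, hadjH e⟩, by
      ext x
      rw [mem_SB]
      constructor
      · intro hc
        by_contra hx
        have := hlow e x hx
        simp only [Function.Embedding.coeFn_mk] at hc
        omega
      · intro hx
        exact hhigh e x hx⟩) ?_
  intro e e' heq
  have hfun : ∀ x, ψf e x = ψf e' x := by
    intro x
    have h0 : (⟨ψf e, hinj e⟩ : Fin t ↪ Fin (m + d)) = ⟨ψf e', hinj e'⟩ :=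
      congrArg (fun z : {ψ : EH m d F // SB ψ.1 = I} => z.1.1) heq
    exact DFunLike.congr_fun h0 x
  have h1 : e.1 = e'.1 := by
    apply DFunLike.ext
    intro z
    have hv := congrArg Fin.val (hfun z.1)
    rw [hr1 e z.1 z.2, hr1 e' z.1 z.2] at hv
    have hv2 : (e.1 ⟨z.1, z.2⟩).val = (e'.1 ⟨z.1, z.2⟩).val := by omega
    exact Fin.ext hv2
  have h2 : e.2.1 = e'.2.1 := by
    apply DFunLike.ext
    intro z
    have hzI : z.1 ∉ I := Finset.disjoint_right.1 hdisj z.2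
    have hv := congrArg Fin.val (hfun z.1)
    rw [hr2 e z.1 hzI z.2, hr2 e' z.1 hzI z.2] at hv
    exact Fin.ext hv
  have h3 : e.2.2 = e'.2.2 := by
    apply DFunLike.ext
    intro z
    have hzmem2 : (z : Fin t) ∈ (Finset.univ : Finset (Fin t)) \ (I ∪ K) := z.2
    rw [Finset.mem_sdiff, Finset.mem_union] at hzmem2
    have hzI : z.1 ∉ I := fun hc => hzmem2.2 (Or.inl hc)
    have hzK : z.1 ∉ K := fun hc => hzmem2.2 (Or.inr hc)
    have hv := congrArg Fin.val (hfun z.1)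
    rw [hr3 e z.1 hzI hzK, hr3 e' z.1 hzI hzK] at hv
    rw [← h2] at hv
    have h4 : e.2.2 ⟨z.1, hmemR z.1 hzI hzK⟩ = e'.2.2 ⟨z.1, hmemR z.1 hzI hzK⟩ :=
      (oE e.2.1).injective (Fin.ext hv)
    exact h4
  rw [Prod.ext_iff, Prod.ext_iff]
  exact ⟨h1, h2, h3⟩

/-! #### decomposition of a fiber of `theta` -/

lemma cardP {α : Type*} [Fintype α] {P Q : α → Prop} [DecidablePred P]
    [DecidablePred Q] (h : ∀ a, P a → Q a) :
    (Finset.univ.filter P).card ≤ (Finset.univ.filter Q).card := by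
  apply Finset.card_le_card
  intro a ha
  rw [Finset.mem_filter] at ha ⊢
  exact ⟨ha.1, h a ha.2⟩

lemma out_val {S : Finset (Fin t)} {z : Fin t} (hz : z ∈ KK F S)
    (φ : EK m d F) (hS : SB φ.1 = S) : (φ.1 z).val = m - 1 := by
  obtain ⟨hzS, x, hx, hadj⟩ := mem_KK.1 hz
  have hxSB : x ∈ SB φ.1 := by rw [hS]; exact hx
  have hzSB : z ∉ SB φ.1 := by rw [hS]; exact hzS
  exact val_out φ.2 hxSB hadj.symm hzSB

lemma self_empty (I : Finset (Fin t)) (h2 : 2 ≤ (KK F I).card) :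
    (Finset.univ.filter fun φ : EK m d F => SB φ.1 = I) = ∅ := by
  rw [Finset.filter_eq_empty_iff]
  intro φ _
  intro hS
  obtain ⟨z1, hz1, z2, hz2, hne⟩ := Finset.one_lt_card.1 (by omega : 1 < (KK F I).card)
  have h1 := out_val hz1 φ hS
  have h2' := out_val hz2 φ hS
  exact hne (φ.1.injective (Fin.ext (by omega)))

lemma fiber_decomp (I : Finset (Fin t)) :
    (Finset.univ.filter fun φ : EK m d F => theta φ = I) ⊆
      ((Finset.univ.filter fun φ : EK m d F => theta φ = I ∧ SB φ.1 = I)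
      ∪ (Finset.univ.filter fun φ : EK m d F =>
          theta φ = I ∧ (SB φ.1 = I ∪ KK F I ∧ ¬ IndepOn F (I ∪ KK F I))))
      ∪ (KK F I).biUnion (fun u => Finset.univ.filter fun φ : EK m d F =>
          theta φ = I ∧ (SB φ.1 = (I ∪ KK F I).erase u ∧
            ¬ IndepOn F ((I ∪ KK F I).erase u))) := by
  intro φ hφ
  have hth : theta φ = I := (Finset.mem_filter.1 hφ).2
  rw [Finset.mem_union, Finset.mem_union]
  by_cases hind : IndepOn F (SB φ.1)
  · left; left
    rw [Finset.mem_filter]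
    refine ⟨Finset.mem_univ _, hth, ?_⟩
    have hts : theta φ = SB φ.1 := by unfold theta; rw [dif_pos hind]
    rw [← hts]
    exact hth
  · have hspec := theta_spec (φ := φ) rfl hind
    set w := (if ((φ.1 (pOf F (SB φ.1) hind)).val < (φ.1 (qOf F (SB φ.1) hind)).val)
       then pOf F (SB φ.1) hind else qOf F (SB φ.1) hind) with hw
    have hwS : w ∈ SB φ.1 := by
      rw [hw]; split
      · exact (pOf_spec hind).1
      · exact (qOf_spec hind).1
    have hIsub : I ⊆ SB φ.1 := by
      rw [← hth, hspec]
      exact greedyI_subset hwS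
    have hSsub : SB φ.1 ⊆ I ∪ KK F I := by
      intro z hz
      by_cases hzI : z ∈ I
      · exact Finset.mem_union_left _ hzI
      · have hzg : z ∉ greedyI F (SB φ.1) w := by rw [← hspec, hth]; exact hzI
        obtain ⟨y, hy, hadj⟩ := greedyI_dom z hz hzg
        have hyI : y ∈ I := by rw [← hth, hspec]; exact hy
        exact Finset.mem_union_right _ (mem_KK.2 ⟨hzI, y, hyI, hadj⟩)
    have huniq : ∀ z1 ∈ KK F I \ SB φ.1, ∀ z2 ∈ KK F I \ SB φ.1, z1 = z2 := by
      intro z1 hz1 z2 hz2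
      rw [Finset.mem_sdiff] at hz1 hz2
      obtain ⟨hz1K, x1, hx1, hadj1⟩ := mem_KK.1 hz1.1
      obtain ⟨hz2K, x2, hx2, hadj2⟩ := mem_KK.1 hz2.1
      have v1 := val_out φ.2 (hIsub hx1) hadj1.symm hz1.2
      have v2 := val_out φ.2 (hIsub hx2) hadj2.symm hz2.2
      exact φ.1.injective (Fin.ext (by omega))
    rcases Finset.eq_empty_or_nonempty (KK F I \ SB φ.1) with hem | ⟨z0, hz0⟩
    · left; right
      rw [Finset.mem_filter]
      have hSeq : SB φ.1 = I ∪ KK F I := by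
        apply Finset.Subset.antisymm hSsub
        rw [Finset.union_subset_iff]
        refine ⟨hIsub, ?_⟩
        intro z hz
        by_contra hzS
        have : z ∈ KK F I \ SB φ.1 := Finset.mem_sdiff.2 ⟨hz, hzS⟩
        rw [hem] at this
        exact Finset.notMem_empty _ this
      exact ⟨Finset.mem_univ _, hth, hSeq, by rw [← hSeq]; exact hind⟩
    · right
      have hz0' := hz0
      rw [Finset.mem_sdiff] at hz0'
      rw [Finset.mem_biUnion]
      refine ⟨z0, hz0'.1, ?_⟩
      rw [Finset.mem_filter]
      have hSeq : SB φ.1 = (I ∪ KK F I).erase z0 := by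
        apply Finset.Subset.antisymm
        · intro z hz
          rw [Finset.mem_erase]
          refine ⟨?_, hSsub hz⟩
          rintro rfl
          exact hz0'.2 hz
        · intro z hz
          rw [Finset.mem_erase] at hz
          rcases Finset.mem_union.1 hz.2 with h | h
          · exact hIsub h
          · by_contra hzS
            have heq0 : z = z0 := huniq z (Finset.mem_sdiff.2 ⟨h, hzS⟩) z0 hz0
            exact hz.1 heq0
      exact ⟨Finset.mem_univ _, hth, hSeq, by rw [← hSeq]; exact hind⟩

/-! #### the per-fiber comparison -/

lemma hm2_of {d s κ J t m : ℕ} (hd : 1 ≤ d) (hs : 1 ≤ s) (hj : J + s + κ = t)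
    (hm : 2 * d * t + t ≤ m) : (2 * d + 1) * J + 2 * d + κ ≤ m := by
  have h1 : 2 * d * t = 2 * d * J + 2 * d * s + 2 * d * κ := by rw [← hj]; ring
  have h2 : 2 * d * 1 ≤ 2 * d * s := Nat.mul_le_mul_left _ hs
  have h3 : 1 * κ ≤ 2 * d * κ := Nat.mul_le_mul_right _ (by omega)
  nlinarith

set_option maxHeartbeats 2000000 in
lemma per_fiber (hm : 2 * d * t + t ≤ m) (ht : 3 ≤ t) (I : Finset (Fin t)) :
    (Finset.univ.filter fun φ : EK m d F => theta φ = I).card ≤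
    (Finset.univ.filter fun ψ : EH m d F => SB ψ.1 = I).card := by
  classical
  by_cases hI : IndepOn F I
  swap
  · have h0 : (Finset.univ.filter fun φ : EK m d F => theta φ = I).card = 0 := by
      rw [Finset.card_eq_zero, Finset.filter_eq_empty_iff]
      intro φ _ hth
      exact hI (hth ▸ theta_indep φ)
    omega
  rcases Nat.eq_zero_or_pos d with rfl | hd
  · -- `d = 0` : identical graphs, direct injection
    apply Finset.card_le_card_of_injOn
      (fun φ => (⟨φ.1, by
        intro x y hadj
        have h := φ.2 x y hadj
        rw [adjK_iff] at h
        rw [adjH_iff]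
        have hx := (φ.1 x).isLt
        have hy := (φ.1 y).isLt
        exact ⟨h.1, Or.inl ⟨by omega, by omega⟩⟩⟩ : EH m 0 F))
    · intro φ hφ
      rw [Finset.mem_coe, Finset.mem_filter] at hφ ⊢
      refine ⟨Finset.mem_univ _, ?_⟩
      have hSBe : SB (φ.1) = (∅ : Finset (Fin t)) := by
        rw [Finset.eq_empty_iff_forall_notMem]
        intro x hx
        have h1 := mem_SB.1 hx
        have h2 := (φ.1 x).isLt
        omega
      have hind : IndepOn F (SB φ.1) := by
        rw [hSBe]; intro x hx; exact absurd hx (Finset.notMem_empty x)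
      have hts : theta φ = SB φ.1 := by unfold theta; rw [dif_pos hind]
      show SB φ.1 = I
      rw [← hts]; exact hφ.2
    · intro a _ b _ hab
      have h2 := congrArg Subtype.val hab
      exact Subtype.ext h2
  -- main case `d ≥ 1`
  have hdm : d ≤ m := by nlinarith
  have h2t : 2 * t ≤ m := by nlinarith
  have hst : I.card + (KK F I).card ≤ t := by
    have h := Finset.card_le_univ (I ∪ KK F I)
    rw [Finset.card_union_of_disjoint (KK_disj F I), Fintype.card_fin] at h
    exact h
  have hH := H_lower hdm I hI
  set A1 := Finset.univ.filter fun φ : EK m d F => theta φ = I ∧ SB φ.1 = I with hA1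
  set A2 := Finset.univ.filter fun φ : EK m d F =>
      theta φ = I ∧ (SB φ.1 = I ∪ KK F I ∧ ¬ IndepOn F (I ∪ KK F I)) with hA2
  set A3 := fun u => Finset.univ.filter fun φ : EK m d F =>
      theta φ = I ∧ (SB φ.1 = (I ∪ KK F I).erase u ∧
        ¬ IndepOn F ((I ∪ KK F I).erase u)) with hA3
  have hL : (Finset.univ.filter fun φ : EK m d F => theta φ = I).card ≤
      A1.card + A2.card + ∑ u ∈ KK F I, (A3 u).card := by
    calc (Finset.univ.filter fun φ : EK m d F => theta φ = I).card
        ≤ ((A1 ∪ A2) ∪ (KK F I).biUnion A3).card :=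
          Finset.card_le_card (fiber_decomp I)
      _ ≤ (A1 ∪ A2).card + ((KK F I).biUnion A3).card := Finset.card_union_le _ _
      _ ≤ A1.card + A2.card + ((KK F I).biUnion A3).card := by
          have := Finset.card_union_le A1 A2; omega
      _ ≤ A1.card + A2.card + ∑ u ∈ KK F I, (A3 u).card := by
          have := Finset.card_biUnion_le (s := KK F I) (t := A3); omega
  have hScard : (I ∪ KK F I).card = I.card + (KK F I).card :=
    Finset.card_union_of_disjoint (KK_disj F I)
  -- bound for the middle piece
  have hA2b : 2 * A2.card ≤
      d.descFactorial (I.card + (KK F I).card) *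
        m.descFactorial (t - I.card - (KK F I).card)
      + 2 * (if t - I.card - (KK F I).card = 0 then 0
          else d.descFactorial (I.card + (KK F I).card) *
            (m - 1).descFactorial (t - I.card - (KK F I).card - 1)) := by
    by_cases hcl : KK F (I ∪ KK F I) = ∅
    · have step1 : A2.card ≤ (Finset.univ.filter fun φ : EK m d F =>
          theta φ = I ∧ (SB φ.1 = I ∪ KK F I ∧ ¬ IndepOn F (I ∪ KK F I)) ∧
            ∀ u ∈ (∅ : Finset (Fin t)), (φ.1 u).val = m - 1).card := by
        rw [hA2]
        apply cardP
        rintro a ⟨h1, h2⟩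
        exact ⟨h1, h2, fun u hu => absurd hu (Finset.notMem_empty u)⟩
      have step2 := halving (m := m) (d := d) I (I ∪ KK F I) ∅ hI
        (fun w hw => absurd hw (Finset.notMem_empty w))
      have step3 : (Finset.univ.filter fun φ : EK m d F =>
          SB φ.1 = I ∪ KK F I ∧
            ∀ u ∈ (∅ : Finset (Fin t)), (φ.1 u).val = m - 1).card ≤
          (Finset.univ.filter fun φ : EK m d F => SB φ.1 = I ∪ KK F I).card := by
        apply cardP
        rintro a ⟨h1, -⟩
        exact h1
      have step4 := card_class_le (m := m) (d := d) (F := F) (I ∪ KK F I)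
      rw [hScard] at step4
      have e1 : t - (I.card + (KK F I).card) = t - I.card - (KK F I).card := by omega
      rw [e1] at step4
      have hchain : 2 * A2.card ≤ d.descFactorial (I.card + (KK F I).card) *
          m.descFactorial (t - I.card - (KK F I).card) := by
        calc 2 * A2.card ≤ 2 * _ := Nat.mul_le_mul_left 2 step1
          _ ≤ _ := step2
          _ ≤ _ := step3
          _ ≤ _ := step4
      omega
    · obtain ⟨u0, hu0⟩ := Finset.nonempty_iff_ne_empty.2 hcl
      have hu0S : u0 ∉ I ∪ KK F I := (mem_KK.1 hu0).1
      have hJ1 : I.card + (KK F I).card < t := by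
        have h5 := Finset.card_le_univ (insert u0 (I ∪ KK F I))
        rw [Fintype.card_fin, Finset.card_insert_of_notMem hu0S, hScard] at h5
        omega
      have step1 : A2.card ≤ (Finset.univ.filter fun φ : EK m d F =>
          theta φ = I ∧ (SB φ.1 = I ∪ KK F I ∧ ¬ IndepOn F (I ∪ KK F I)) ∧
            ∀ u ∈ ({u0} : Finset (Fin t)), (φ.1 u).val = m - 1).card := by
        rw [hA2]
        apply cardP
        rintro a ⟨h1, h2⟩
        refine ⟨h1, h2, ?_⟩
        intro u hu
        rw [Finset.mem_singleton] at hu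
        subst hu
        exact out_val hu0 a h2.1
      have step2 := halving (m := m) (d := d) I (I ∪ KK F I) {u0} hI
        (by intro w hw; rw [Finset.mem_singleton] at hw; subst hw; exact hu0S)
      have step3 : (Finset.univ.filter fun φ : EK m d F =>
          SB φ.1 = I ∪ KK F I ∧
            ∀ u ∈ ({u0} : Finset (Fin t)), (φ.1 u).val = m - 1).card ≤
          (Finset.univ.filter fun φ : EK m d F =>
            SB φ.1 = I ∪ KK F I ∧ (φ.1 u0).val = m - 1).card := by
        apply cardP
        rintro a ⟨h1, h2⟩
        exact ⟨h1, h2 u0 (Finset.mem_singleton_self u0)⟩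
      have step4 := card_classv_le (m := m) (d := d) (F := F) (I ∪ KK F I) u0 hu0S
      rw [hScard] at step4
      have e1 : t - (I.card + (KK F I).card) - 1 = t - I.card - (KK F I).card - 1 := by
        omega
      rw [e1] at step4
      rw [if_neg (by omega : ¬ (t - I.card - (KK F I).card = 0))]
      have hchain : 2 * A2.card ≤ d.descFactorial (I.card + (KK F I).card) *
          (m - 1).descFactorial (t - I.card - (KK F I).card - 1) := by
        calc 2 * A2.card ≤ 2 * _ := Nat.mul_le_mul_left 2 step1
          _ ≤ _ := step2
          _ ≤ _ := step3
          _ ≤ _ := step4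
      omega
  -- bound for the erase pieces
  have hA3b : ∀ u ∈ KK F I, 2 * (A3 u).card ≤
      d.descFactorial (I.card + (KK F I).card - 1) *
        (m - 1).descFactorial (t - I.card - (KK F I).card) := by
    intro u hu
    have hκ1' : 1 ≤ (KK F I).card := Finset.card_pos.2 ⟨u, hu⟩
    have huIK : u ∈ I ∪ KK F I := Finset.mem_union_right _ hu
    have huI : u ∉ I := (mem_KK.1 hu).1
    obtain ⟨-, x, hxI, hadj⟩ := mem_KK.1 hu
    have hcardSu : ((I ∪ KK F I).erase u).card = I.card + (KK F I).card - 1 := by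
      rw [Finset.card_erase_of_mem huIK, hScard]
    have hxSu : x ∈ (I ∪ KK F I).erase u := by
      rw [Finset.mem_erase]
      exact ⟨fun hc => huI (hc ▸ hxI), Finset.mem_union_left _ hxI⟩
    have huK' : u ∈ KK F ((I ∪ KK F I).erase u) :=
      mem_KK.2 ⟨Finset.notMem_erase _ _, x, hxSu, hadj⟩
    have step1 : (A3 u).card ≤ (Finset.univ.filter fun φ : EK m d F =>
        theta φ = I ∧ (SB φ.1 = (I ∪ KK F I).erase u ∧
          ¬ IndepOn F ((I ∪ KK F I).erase u)) ∧
          ∀ w ∈ ({u} : Finset (Fin t)), (φ.1 w).val = m - 1).card := by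
      rw [hA3]
      apply cardP
      rintro a ⟨h1, h2⟩
      refine ⟨h1, h2, ?_⟩
      intro w hw
      rw [Finset.mem_singleton] at hw
      subst hw
      exact out_val huK' a h2.1
    have step2 := halving (m := m) (d := d) I ((I ∪ KK F I).erase u) {u} hI
      (by intro w hw; rw [Finset.mem_singleton] at hw; subst hw
          exact Finset.notMem_erase _ _)
    have step3 : (Finset.univ.filter fun φ : EK m d F =>
        SB φ.1 = (I ∪ KK F I).erase u ∧
          ∀ w ∈ ({u} : Finset (Fin t)), (φ.1 w).val = m - 1).card ≤
        (Finset.univ.filter fun φ : EK m d F =>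
          SB φ.1 = (I ∪ KK F I).erase u ∧ (φ.1 u).val = m - 1).card := by
      apply cardP
      rintro a ⟨h1, h2⟩
      exact ⟨h1, h2 u (Finset.mem_singleton_self u)⟩
    have step4 := card_classv_le (m := m) (d := d) (F := F)
      ((I ∪ KK F I).erase u) u (Finset.notMem_erase _ _)
    rw [hcardSu] at step4
    have e1 : t - (I.card + (KK F I).card - 1) - 1 = t - I.card - (KK F I).card := by
      omega
    rw [e1] at step4
    calc 2 * (A3 u).card ≤ 2 * _ := Nat.mul_le_mul_left 2 step1
      _ ≤ _ := step2
      _ ≤ _ := step3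
      _ ≤ _ := step4
  rcases Nat.eq_zero_or_pos (KK F I).card with hκ0 | hκpos
  · -- κ = 0
    have hK0 : KK F I = ∅ := Finset.card_eq_zero.1 hκ0
    have hA2e : A2.card = 0 := by
      rw [hA2, Finset.card_eq_zero, Finset.filter_eq_empty_iff]
      rintro φ _ ⟨h1, h2, h3⟩
      rw [hK0, Finset.union_empty] at h3
      exact h3 hI
    have hA3e : ∑ u ∈ KK F I, (A3 u).card = 0 := by
      rw [hK0, Finset.sum_empty]
    have hA1b : A1.card ≤ d.descFactorial I.card * m.descFactorial (t - I.card) := by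
      calc A1.card ≤ (Finset.univ.filter fun φ : EK m d F => SB φ.1 = I).card := by
            rw [hA1]
            apply cardP
            rintro a ⟨-, h2⟩
            exact h2
        _ ≤ _ := card_class_le I
    rw [hκ0] at hH
    simp only [Nat.descFactorial_zero, Nat.sub_zero, one_mul] at hH
    omega
  -- κ ≥ 1
  have hs1 : 1 ≤ I.card := by
    obtain ⟨z, hz⟩ := Finset.card_pos.1 hκpos
    obtain ⟨-, x, hx, -⟩ := mem_KK.1 hz
    exact Finset.card_pos.2 ⟨x, hx⟩
  have hJs : (t - I.card - (KK F I).card) + I.card + (KK F I).card = t := by omega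
  rcases eq_or_lt_of_le (Nat.one_le_iff_ne_zero.2 hκpos.ne') with hκ1 | hκ2
  · -- κ = 1
    obtain ⟨z0, hz0⟩ := Finset.card_eq_one.1 hκ1.symm
    have hz0K : z0 ∈ KK F I := by rw [hz0]; exact Finset.mem_singleton_self _
    have hz0I : z0 ∉ I := (mem_KK.1 hz0K).1
    have hA1b : A1.card ≤ d.descFactorial I.card *
        (m - 1).descFactorial (t - I.card - 1) := by
      calc A1.card ≤ (Finset.univ.filter fun φ : EK m d F =>
          SB φ.1 = I ∧ (φ.1 z0).val = m - 1).card := by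
            rw [hA1]
            apply cardP
            rintro a ⟨-, h2⟩
            exact ⟨h2, out_val hz0K a h2⟩
        _ ≤ _ := card_classv_le I z0 hz0I
    have hA3e : ∑ u ∈ KK F I, (A3 u).card = 0 := by
      apply Finset.sum_eq_zero
      intro u hu
      have hu' := hu
      rw [hz0, Finset.mem_singleton] at hu'
      subst hu'
      have herase : (I ∪ KK F I).erase u = I := by
        rw [hz0]
        ext z
        rw [Finset.mem_erase, Finset.mem_union, Finset.mem_singleton]
        constructor
        · rintro ⟨h1, h2 | h2⟩
          · exact h2
          · exact absurd h2 h1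
        · intro hz
          exact ⟨fun hc => hz0I (hc ▸ hz), Or.inl hz⟩
      rw [hA3, Finset.card_eq_zero, Finset.filter_eq_empty_iff]
      rintro φ _ ⟨-, -, h3⟩
      rw [herase] at h3
      exact h3 hI
    have hsp := spade1 (d := d) (s := I.card) (m := m) (J := t - I.card - 1)
      hs1 (by omega)
    have hκe : (KK F I).card = 1 := by omega
    rw [hκe] at hA2b hH
    rw [Nat.descFactorial_one] at hH
    omega
  · -- κ ≥ 2
    have hκ2' : 2 ≤ (KK F I).card := hκ2
    have hA1e : A1.card = 0 := by
      have h0 := self_empty (m := m) (d := d) I hκ2'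
      have hle : A1.card ≤ (Finset.univ.filter fun φ : EK m d F =>
          SB φ.1 = I).card := by
        rw [hA1]
        apply cardP
        rintro a ⟨-, h2⟩
        exact h2
      rw [h0] at hle
      simp only [Finset.card_empty] at hle
      omega
    have hA3sum : ∑ u ∈ KK F I, 2 * (A3 u).card ≤ (KK F I).card *
        (d.descFactorial (I.card + (KK F I).card - 1) *
          (m - 1).descFactorial (t - I.card - (KK F I).card)) := by
      calc ∑ u ∈ KK F I, 2 * (A3 u).card
          ≤ ∑ _u ∈ KK F I, (d.descFactorial (I.card + (KK F I).card - 1) *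
            (m - 1).descFactorial (t - I.card - (KK F I).card)) :=
            Finset.sum_le_sum hA3b
        _ = _ := by rw [Finset.sum_const, smul_eq_mul]
    have hsum2 : 2 * (∑ u ∈ KK F I, (A3 u).card) =
        ∑ u ∈ KK F I, 2 * (A3 u).card := by
      rw [Finset.mul_sum]
    have hsp := spade2 (d := d) (s := I.card) (κ := (KK F I).card) (m := m)
      (J := t - I.card - (KK F I).card) hs1 hκ2' (by omega)
      (hm2_of hd hs1 hJs hm)
    omega

lemma master (hm : 2 * d * t + t ≤ m) (ht : 3 ≤ t) :
    Fintype.card (EK m d F) ≤ Fintype.card (EH m d F) := by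
  classical
  rw [← Finset.card_univ (α := EK m d F), ← Finset.card_univ (α := EH m d F)]
  rw [Finset.card_eq_sum_card_fiberwise
    (f := fun φ : EK m d F => theta φ) (t := (Finset.univ : Finset (Finset (Fin t))))
    (fun x _ => Finset.mem_univ _)]
  rw [Finset.card_eq_sum_card_fiberwise
    (f := fun ψ : EH m d F => SB ψ.1) (t := (Finset.univ : Finset (Finset (Fin t))))
    (fun x _ => Finset.mem_univ _)]
  refine Finset.sum_le_sum fun I _ => ?_
  have h := per_fiber (m := m) (d := d) (F := F) hm ht I
  exact h

end Structural

end KHAux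


theorem Knd'_le_Hnd_labeled_copies (n d t : ℕ) (ht : 3 ≤ t)
    (hn : 2 * d * t + d + t ≤ n) (F : SimpleGraph (Fin t)) :
    labeledCopies (Knd' n d) F ≤ labeledCopies (Hnd n d) F := by
  classical
  have h1 : n = (n - d) + d := by omega
  rw [h1]
  unfold labeledCopies
  rw [Nat.card_eq_fintype_card, Nat.card_eq_fintype_card]
  exact KHAux.master (m := n - d) (d := d) (F := F) (by omega) ht
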